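/- Let C be a QC code of length mℓ and index ℓ over F_q with reduced Gröbner basis matrix G̃(x) upper triangular with diagonal entries g_{jj}(x) dividing x^m − 1. Then the F_q-dimension of C equals mℓ − Σ_{j=0}^{ℓ−1} deg(g_{jj}(x)). -/

import Mathlib

set_option maxHeartbeats 1000000

open Polynomial

namespace Stmt3Aux

variable {F : Type*} [Field F] {ℓ : ℕ}

/-- `AdjoinRoot.mk` as an `F`-linear map. -/
noncomputable def mkL (f : Polynomial F) : Polynomial F →ₗ[F] AdjoinRoot f where
  toFun := AdjoinRoot.mk f
  map_add' := fun a b => map_add _ a b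
  map_smul' := by
    intro c p
    simp only [RingHom.id_apply]
    rw [Polynomial.smul_eq_C_mul, map_mul, Algebra.smul_def, AdjoinRoot.algebraMap_eq]
    rfl

/-- Componentwise reduction mod `f`, as an `F`-linear map. -/
noncomputable def piMk (f : Polynomial F) :
    (Fin ℓ → Polynomial F) →ₗ[F] (Fin ℓ → AdjoinRoot f) :=
  LinearMap.pi fun j => (mkL f).comp (LinearMap.proj j)

@[simp] lemma piMk_apply (f : Polynomial F) (v : Fin ℓ → Polynomial F) (j : Fin ℓ) :
    piMk f v j = AdjoinRoot.mk f (v j) := rfl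

lemma piMk_surjective (f : Polynomial F) : Function.Surjective (piMk (ℓ := ℓ) f) := by
  intro w
  refine ⟨fun j => (AdjoinRoot.mk_surjective (w j)).choose, ?_⟩
  funext j
  exact (AdjoinRoot.mk_surjective (w j)).choose_spec

lemma piMk_sum_smul (f : Polynomial F) (c : Fin ℓ → Polynomial F)
    (w : Fin ℓ → Fin ℓ → Polynomial F) :
    piMk f (∑ i, c i • w i) = ∑ i, AdjoinRoot.mk f (c i) • piMk f (w i) := by
  rw [map_sum]
  refine Finset.sum_congr rfl fun i _ => ?_
  funext j
  simp [smul_eq_mul, map_mul]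

section Division

variable (G : Matrix (Fin ℓ) (Fin ℓ) (Polynomial F))

/-- Division algorithm: every vector is congruent modulo the row module to a
vector whose `j`-th entry has degree `< deg (G j j)`. -/
lemma aux_div (htri : ∀ i j : Fin ℓ, j < i → G i j = 0) (hg0 : ∀ j, G j j ≠ 0) :
    ∀ v : Fin ℓ → Polynomial F,
      ∃ u ∈ Submodule.span (Polynomial F) (Set.range fun i => G i),
        ∀ j, ((v - u) j).degree < (G j j).degree := by
  suffices h : ∀ n : ℕ, n ≤ ℓ → ∀ v : Fin ℓ → Polynomial F,
      (∀ j : Fin ℓ, (j : ℕ) < ℓ - n → (v j).degree < (G j j).degree) →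
      ∃ u ∈ Submodule.span (Polynomial F) (Set.range fun i => G i),
        ∀ j, ((v - u) j).degree < (G j j).degree by
    intro v
    exact h ℓ le_rfl v (fun j hj => absurd hj (by omega))
  intro n
  induction n with
  | zero =>
    intro _ v hv
    refine ⟨0, zero_mem _, fun j => ?_⟩
    simpa using hv j (by omega)
  | succ n ih =>
    intro hn v hv
    set k : Fin ℓ := ⟨ℓ - (n + 1), by omega⟩ with hk
    set q := v k / G k k with hq
    have hside : ∀ j : Fin ℓ, (j : ℕ) < ℓ - n → ((v - q • G k) j).degree < (G j j).degree := by
      intro j hj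
      rcases lt_or_eq_of_le (Nat.lt_succ_iff.mp (by omega : (j : ℕ) < (ℓ - (n+1)) + 1)) with hlt | heq
      · have hjk : j < k := by
          rw [Fin.lt_def, hk]
          exact hlt
        have hGk : G k j = 0 := htri k j hjk
        have : (v - q • G k) j = v j := by
          simp [Pi.sub_apply, Pi.smul_apply, hGk]
        rw [this]
        exact hv j (by omega)
      · have hjk : j = k := by
          apply Fin.ext
          rw [hk]
          exact heq
        rw [hjk]
        have hmod : (v - q • G k) k = v k % G k k := by
          have h2 := EuclideanDomain.div_add_mod (v k) (G k k)
          simp only [Pi.sub_apply, Pi.smul_apply, smul_eq_mul, hq]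
          linear_combination (norm := ring_nf) -h2
        rw [hmod]
        exact EuclideanDomain.mod_lt (v k) (hg0 k)
    obtain ⟨u1, hu1, hu1'⟩ := ih (by omega) (v - q • G k) hside
    refine ⟨q • G k + u1, ?_, fun j => ?_⟩
    · exact add_mem (Submodule.smul_mem _ q (Submodule.subset_span ⟨k, rfl⟩)) hu1
    · have : v - (q • G k + u1) = (v - q • G k) - u1 := by abel
      rw [this]
      exact hu1' j

/-- Linear independence: a vector in the row module with all entries of degree
`< deg (G j j)` is zero. -/
lemma aux_indep (htri : ∀ i j : Fin ℓ, j < i → G i j = 0) (hg0 : ∀ j, G j j ≠ 0)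
    (v : Fin ℓ → Polynomial F)
    (hv : v ∈ Submodule.span (Polynomial F) (Set.range fun i => G i))
    (hvd : ∀ j, (v j).degree < (G j j).degree) : v = 0 := by
  rw [Submodule.mem_span_range_iff_exists_fun] at hv
  obtain ⟨c, hc⟩ := hv
  have key : ∀ i : Fin ℓ, (∀ i' : Fin ℓ, i' < i → c i' = 0) → c i = 0 := by
    intro i hlow
    by_contra hci
    have hvi : v i = c i * G i i := by
      have := congrFun hc i
      rw [Finset.sum_apply] at this
      rw [← this]
      rw [Finset.sum_eq_single i]
      · simp [smul_eq_mul]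
      · intro b _ hb
        rcases lt_or_gt_of_ne hb with hblt | hbgt
        · simp [hlow b hblt]
        · simp [htri b i hbgt]
      · simp
    have h1 : (G i i).degree ≤ (v i).degree := by
      rw [hvi, mul_comm]
      exact degree_le_mul_left (G i i) hci
    exact absurd (lt_of_le_of_lt h1 (hvd i)) (lt_irrefl _)
  have hall : ∀ N : ℕ, ∀ i : Fin ℓ, (i : ℕ) < N → c i = 0 := by
    intro N
    induction N with
    | zero => intro i hi; omega
    | succ N ihN =>
      intro i hi
      rcases Nat.lt_succ_iff_lt_or_eq.mp hi with h | h
      · exact ihN i h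
      · exact key i fun i' hi' => ihN i' (by omega)
  have hc0 : c = 0 := funext fun i => hall ℓ i i.isLt
  rw [← hc, hc0]
  simp

end Division

end Stmt3Aux

open Stmt3Aux

theorem stmt3 (F : Type*) [Field F] (m ℓ : ℕ) (hm : 0 < m)
    (G : Matrix (Fin ℓ) (Fin ℓ) (Polynomial F))
    -- reduced Gröbner basis conditions
    (htri : ∀ i j : Fin ℓ, j < i → G i j = 0)
    (hdeg : ∀ i j : Fin ℓ, i < j → (G i j).degree < (G j j).degree)
    (hdvd : ∀ j : Fin ℓ, G j j ∣ X ^ m - C 1)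
    (hcol : ∀ j : Fin ℓ, G j j = X ^ m - C 1 → ∀ i : Fin ℓ, i ≠ j → G i j = 0)
    -- the rows of G generate the preimage of C in F[x]^ℓ (which contains (x^m−1)e_j)
    (hker : ∀ j : Fin ℓ, (fun k => if k = j then X ^ m - C 1 else 0) ∈
      Submodule.span (Polynomial F) (Set.range fun i => G i)) :
    Module.finrank F
      ↥(Submodule.span (AdjoinRoot (X ^ m - C 1 : Polynomial F))
        (Set.range fun i : Fin ℓ => fun j : Fin ℓ => AdjoinRoot.mk (X ^ m - C 1 : Polynomial F) (G i j)))
      = m * ℓ - ∑ j : Fin ℓ, (G j j).natDegree := by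
  classical
  set f : Polynomial F := X ^ m - C 1 with hf_def
  have hf0 : f ≠ 0 := X_pow_sub_C_ne_zero hm 1
  have hfdeg : f.natDegree = m := natDegree_X_pow_sub_C
  have hg0 : ∀ j, G j j ≠ 0 := by
    intro j hj
    exact hf0 (eq_zero_of_zero_dvd (hj ▸ hdvd j))
  have hdm : ∀ j, (G j j).natDegree ≤ m := fun j => hfdeg ▸ natDegree_le_of_dvd (hdvd j) hf0
  have hfin : Module.Finite F (AdjoinRoot f) := (AdjoinRoot.powerBasis hf0).finite
  have hrR : Module.finrank F (AdjoinRoot f) = m := by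
    rw [(AdjoinRoot.powerBasis hf0).finrank]
    exact hfdeg
  set M : Submodule (Polynomial F) (Fin ℓ → Polynomial F) :=
    Submodule.span (Polynomial F) (Set.range fun i => G i) with hM_def
  set Cc : Submodule F (Fin ℓ → AdjoinRoot f) :=
    (Submodule.span (AdjoinRoot f)
      (Set.range fun i : Fin ℓ => fun j : Fin ℓ => AdjoinRoot.mk f (G i j))).restrictScalars F
    with hCc_def
  set W : Submodule F (Fin ℓ → Polynomial F) :=
    Submodule.pi Set.univ (fun j => degreeLT F ((G j j).natDegree)) with hW_def
  have hWmem : ∀ v : Fin ℓ → Polynomial F,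
      v ∈ W ↔ ∀ j, (v j).degree < (G j j).degree := by
    intro v
    rw [hW_def, Submodule.mem_pi]
    refine ⟨fun h j => ?_, fun h j _ => ?_⟩
    · have := mem_degreeLT.mp (h j (Set.mem_univ j))
      rwa [degree_eq_natDegree (hg0 j)]
    · rw [mem_degreeLT, ← degree_eq_natDegree (hg0 j)]
      exact h j
  have hkerπ : ∀ v : Fin ℓ → Polynomial F, piMk f v = 0 ↔ ∀ j, f ∣ v j := by
    intro v
    rw [funext_iff]
    exact forall_congr' fun j => by
      rw [piMk_apply, Pi.zero_apply, AdjoinRoot.mk_eq_zero]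
  have hkerM : ∀ v : Fin ℓ → Polynomial F, (∀ j, f ∣ v j) → v ∈ M := by
    intro v hv
    choose a ha using hv
    have hveq : v = ∑ j, a j • (fun k => if k = j then f else 0 : Fin ℓ → Polynomial F) := by
      funext kk
      rw [Finset.sum_apply, Finset.sum_eq_single kk]
      · simp [ha kk, mul_comm]
      · intro b _ hb
        simp [Ne.symm hb]
      · simp
    rw [hveq]
    exact Submodule.sum_mem _ fun j _ => Submodule.smul_mem _ _ (hker j)
  have hmap : Submodule.map (piMk f) (M.restrictScalars F) = Cc := by
    apply le_antisymm
    · rintro x ⟨u, hu, rfl⟩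
      simp only [SetLike.mem_coe] at hu
      rw [Submodule.restrictScalars_mem, hM_def, Submodule.mem_span_range_iff_exists_fun] at hu
      obtain ⟨c, hc⟩ := hu
      rw [hCc_def, Submodule.restrictScalars_mem, Submodule.mem_span_range_iff_exists_fun]
      refine ⟨fun i => AdjoinRoot.mk f (c i), ?_⟩
      rw [← hc, piMk_sum_smul f c G]
      rfl
    · intro x hx
      rw [hCc_def, Submodule.restrictScalars_mem, Submodule.mem_span_range_iff_exists_fun] at hx
      obtain ⟨r, hr⟩ := hx
      choose c hc using fun i => AdjoinRoot.mk_surjective (r i)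
      refine ⟨∑ i, c i • G i, ?_, ?_⟩
      · simp only [SetLike.mem_coe]
        rw [Submodule.restrictScalars_mem]
        exact Submodule.sum_mem _ fun i _ =>
          Submodule.smul_mem _ _ (Submodule.subset_span ⟨i, rfl⟩)
      · rw [piMk_sum_smul f c G]
        simp only [hc]
        exact hr
  have hsupM : (M.restrictScalars F) ⊔ W = ⊤ := by
    rw [eq_top_iff]
    rintro v -
    obtain ⟨u, hu, hud⟩ := aux_div G htri hg0 v
    have hveq : v = u + (v - u) := by abel
    rw [hveq]
    exact Submodule.add_mem_sup (by rwa [Submodule.restrictScalars_mem]) ((hWmem _).2 hud)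
  have hπsurj : LinearMap.range (piMk (ℓ := ℓ) f) = ⊤ :=
    LinearMap.range_eq_top.2 (piMk_surjective f)
  have hsup : Cc ⊔ Submodule.map (piMk f) W = ⊤ := by
    rw [← hmap, ← Submodule.map_sup, hsupM, Submodule.map_top, hπsurj]
  have hdisj : Cc ⊓ Submodule.map (piMk f) W = ⊥ := by
    rw [eq_bot_iff]
    rintro x ⟨hxC, w, hw, rfl⟩
    rw [← hmap] at hxC
    obtain ⟨u, hu, hupi⟩ := hxC
    simp only [SetLike.mem_coe] at hu hw
    rw [Submodule.restrictScalars_mem] at hu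
    have hwu : ∀ j, f ∣ (w - u) j := by
      refine (hkerπ _).1 ?_
      rw [map_sub, hupi, sub_self]
    have hwM : w ∈ M := by
      have h1 : w - u ∈ M := hkerM _ hwu
      have hweq : w = u + (w - u) := by abel
      rw [hweq]
      exact add_mem hu h1
    have hw0 : w = 0 := aux_indep G htri hg0 w hwM ((hWmem w).1 hw)
    rw [hw0, map_zero]
    exact Submodule.zero_mem ⊥
  have hcompl : IsCompl Cc (Submodule.map (piMk f) W) :=
    ⟨disjoint_iff.mpr hdisj, codisjoint_iff.mpr hsup⟩
  -- finrank of W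
  have hdltfin : ∀ n : ℕ, Module.Finite F (degreeLT F n) :=
    fun n => Module.Finite.equiv (degreeLTEquiv F n).symm
  have hdltrank : ∀ n : ℕ, Module.finrank F (degreeLT F n) = n :=
    fun n => (degreeLTEquiv F n).finrank_eq.trans (Module.finrank_fin_fun F)
  let e : W ≃ₗ[F] (∀ j : Fin ℓ, degreeLT F ((G j j).natDegree)) :=
    { toFun := fun v j => ⟨v.1 j, v.2 j (Set.mem_univ j)⟩
      map_add' := fun a b => rfl
      map_smul' := fun c a => rfl
      invFun := fun w => ⟨fun j => (w j).1, fun j _ => (w j).2⟩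
      left_inv := fun v => rfl
      right_inv := fun w => rfl }
  have hWrank : Module.finrank F W = ∑ j, (G j j).natDegree := by
    rw [e.finrank_eq, Module.finrank_pi_fintype]
    exact Finset.sum_congr rfl fun j _ => hdltrank _
  -- piMk is injective on W
  have hinj : Function.Injective ((piMk f).comp W.subtype) := by
    intro a b hab
    apply Subtype.ext
    have hdvd0 : ∀ j, f ∣ (a.1 - b.1) j := by
      refine (hkerπ _).1 ?_
      rw [map_sub, sub_eq_zero]
      exact hab
    have hmemW : a.1 - b.1 ∈ W := sub_mem a.2 b.2
    have hdegW := (hWmem _).1 hmemW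
    have hzero : ∀ j, (a.1 - b.1) j = 0 := by
      intro j
      refine Polynomial.eq_zero_of_dvd_of_degree_lt (hdvd0 j) ?_
      exact lt_of_lt_of_le (hdegW j) (degree_le_of_dvd (hdvd j) hf0)
    have : a.1 - b.1 = 0 := funext hzero
    exact sub_eq_zero.mp this
  have hWmaprank : Module.finrank F (Submodule.map (piMk f) W) = Module.finrank F W := by
    have hr : LinearMap.range ((piMk f).comp W.subtype) = Submodule.map (piMk f) W := by
      rw [LinearMap.range_comp, Submodule.range_subtype]
    rw [← hr]
    exact ((LinearEquiv.ofInjective _ hinj).finrank_eq).symm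
  have htot : Module.finrank F (Fin ℓ → AdjoinRoot f) = m * ℓ := by
    rw [Module.finrank_pi_fintype]
    simp [hrR, Finset.sum_const, Finset.card_univ, mul_comm]
  have hadd := Submodule.finrank_add_eq_of_isCompl hcompl
  rw [htot, hWmaprank, hWrank] at hadd
  have hfeq : Module.finrank F
      ↥(Submodule.span (AdjoinRoot (X ^ m - C 1 : Polynomial F))
        (Set.range fun i : Fin ℓ => fun j : Fin ℓ =>
          AdjoinRoot.mk (X ^ m - C 1 : Polynomial F) (G i j))) = Module.finrank F Cc := by
    rw [hCc_def]
    exact (LinearEquiv.finrank_eq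
      ((Submodule.restrictScalarsEquiv F _ _ _).restrictScalars F)).symm
  rw [hfeq]
  omega
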